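/- arXiv:0803.2058 — 6 statements merged into one kernel-verified Lean document; each statement's English description precedes it below -/
import Mathlib

section
/- For holomorphic maps φ, ψ : 𝔻 → 𝔻 (open unit disc), a constant C ∈ [0,1), and unimodular constants ω₁, ω₂, the map f(λ) = (ω₁(φ(λ)+C)/(1+C), ω₂ψ(λ)(1+Cφ(λ))/(1+C), ω₁ω₂φ(λ)ψ(λ)) maps 𝔻 into the tetrablock 𝔼. -/
open Complex Metric

/-- The tetrablock 𝔼 ⊂ ℂ³. -/
def tetrablock : Set (ℂ × ℂ × ℂ) :=
  {z | ‖z.1 - (starRingEnd ℂ) z.2.1 * z.2.2‖ +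
       ‖z.2.1 - (starRingEnd ℂ) z.1 * z.2.2‖ +
       (‖z.2.2‖) ^ 2 < 1}

theorem stmt0 (φ ψ : ℂ → ℂ)
    (hφd : DifferentiableOn ℂ φ (ball (0 : ℂ) 1))
    (hψd : DifferentiableOn ℂ ψ (ball (0 : ℂ) 1))
    (hφm : ∀ l ∈ ball (0 : ℂ) 1, φ l ∈ ball (0 : ℂ) 1)
    (hψm : ∀ l ∈ ball (0 : ℂ) 1, ψ l ∈ ball (0 : ℂ) 1)
    (C : ℝ) (hC0 : 0 ≤ C) (hC1 : C < 1)
    (ω₁ ω₂ : ℂ) (hω₁ : ‖ω₁‖ = 1) (hω₂ : ‖ω₂‖ = 1) :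
    ∀ l ∈ ball (0 : ℂ) 1,
      (ω₁ * (φ l + C) / (1 + C),
       ω₂ * ψ l * (1 + C * φ l) / (1 + C),
       ω₁ * ω₂ * φ l * ψ l) ∈ tetrablock := by
  intro l hl
  set a := φ l with ha'
  set b := ψ l with hb'
  have hx : ‖a‖ < 1 := by
    simpa [mem_ball_zero_iff] using hφm l hl
  have hy : ‖b‖ < 1 := by
    simpa [mem_ball_zero_iff] using hψm l hl
  set x := ‖a‖ with hx'
  set y := ‖b‖ with hy'
  have hx0 : 0 ≤ x := norm_nonneg a
  have hy0 : 0 ≤ y := norm_nonneg b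
  have haa : (starRingEnd ℂ) a * a = ((x : ℂ)) ^ 2 := by
    rw [mul_comm, Complex.mul_conj, Complex.normSq_eq_norm_sq]; push_cast; ring
  have hbb : (starRingEnd ℂ) b * b = ((y : ℂ)) ^ 2 := by
    rw [mul_comm, Complex.mul_conj, Complex.normSq_eq_norm_sq]; push_cast; ring
  have hω₁' : (starRingEnd ℂ) ω₁ * ω₁ = 1 := by
    rw [mul_comm, Complex.mul_conj, Complex.normSq_eq_norm_sq, hω₁]; norm_num
  have hω₂' : (starRingEnd ℂ) ω₂ * ω₂ = 1 := by
    rw [mul_comm, Complex.mul_conj, Complex.normSq_eq_norm_sq, hω₂]; norm_num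
  have h1Cpos : (0 : ℝ) < 1 + C := by linarith
  have h1C : (1 + (C : ℂ)) ≠ 0 := by
    have : ((1 + C : ℝ) : ℂ) ≠ 0 := Complex.ofReal_ne_zero.2 (ne_of_gt h1Cpos)
    push_cast at this; exact this
  have key1 : ω₁ * (a + C) / (1 + C) -
      (starRingEnd ℂ) (ω₂ * b * (1 + C * a) / (1 + C)) * (ω₁ * ω₂ * a * b)
      = ω₁ * (a * (1 - (y : ℂ) ^ 2) + C * (1 - (x : ℂ) ^ 2 * (y : ℂ) ^ 2)) / (1 + C) := by
    simp only [map_mul, map_div₀, map_add, map_one, Complex.conj_ofReal]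
    field_simp
    linear_combination (-ω₁ * (starRingEnd ℂ) b * a * b * (1 + (C:ℂ) * (starRingEnd ℂ) a) *
        (1 + (C:ℂ))) * hω₂' -
      (ω₁ * a * (1 + (C:ℂ) * (starRingEnd ℂ) a) * (1 + (C:ℂ))) * hbb +
      (ω₁ * (C:ℂ) * (y:ℂ)^2 * (1 + (C:ℂ))) * haa +
      (ω₁*a*(C:ℂ)*((starRingEnd ℂ) b)*b + ω₁*a*(C:ℂ)^2*((starRingEnd ℂ) a)*((starRingEnd ℂ) b)*b) *
        hω₂' +
      (ω₁*a*(C:ℂ) + ω₁*a*(C:ℂ)^2*((starRingEnd ℂ) a)) * hbb -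
      (2*(C:ℂ) + (C:ℂ)^2)*ω₁*(y:ℂ)^2 * haa
  have key2 : ω₂ * b * (1 + C * a) / (1 + C) -
      (starRingEnd ℂ) (ω₁ * (a + C) / (1 + C)) * (ω₁ * ω₂ * a * b)
      = ω₂ * b * (1 - (x : ℂ) ^ 2) / (1 + C) := by
    simp only [map_mul, map_div₀, map_add, map_one, Complex.conj_ofReal]
    field_simp
    linear_combination (-(starRingEnd ℂ) a * ω₂ * a * b * (1 + (C:ℂ))) * hω₁' -
      ((C:ℂ) * ω₂ * a * b * (1 + (C:ℂ))) * hω₁' + (ω₂ * b * (1 + (C:ℂ))) * haa +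
      (ω₂*b*(C:ℂ)*a*((starRingEnd ℂ) a) + ω₂*b*(C:ℂ)^2*a)*hω₁' - (ω₂*b*(C:ℂ))*haa - 2*ω₂*b*haa
  have hy2 : (0:ℝ) ≤ 1 - y ^ 2 := by nlinarith
  have hx2 : (0:ℝ) ≤ 1 - x ^ 2 := by nlinarith
  have hxy2 : (0:ℝ) ≤ 1 - x ^ 2 * y ^ 2 := by nlinarith
  have habs1C : ‖1 + (C:ℂ)‖ = 1 + C := by
    rw [show (1 + (C:ℂ)) = ((1 + C : ℝ) : ℂ) by push_cast; ring, Complex.norm_real, Real.norm_eq_abs,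
      abs_of_pos h1Cpos]
  have e1 : ‖ω₁ * (a + C) / (1 + C) -
      (starRingEnd ℂ) (ω₂ * b * (1 + C * a) / (1 + C)) * (ω₁ * ω₂ * a * b)‖
      ≤ (x * (1 - y ^ 2) + C * (1 - x ^ 2 * y ^ 2)) / (1 + C) := by
    rw [key1, norm_div, norm_mul, hω₁, one_mul, habs1C]
    apply div_le_div_of_nonneg_right ?_ h1Cpos.le |>.trans_eq rfl
    calc ‖a * (1 - (y:ℂ)^2) + C * (1 - (x:ℂ)^2 * (y:ℂ)^2)‖
        ≤ ‖a * (1 - (y:ℂ)^2)‖ + ‖(C:ℂ) * (1 - (x:ℂ)^2 * (y:ℂ)^2)‖ :=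
          norm_add_le _ _
      _ = x * (1 - y ^ 2) + C * (1 - x ^ 2 * y ^ 2) := by
          rw [norm_mul, norm_mul]
          rw [show (1 - (y:ℂ)^2) = ((1 - y^2 : ℝ) : ℂ) by push_cast; ring,
            show (1 - (x:ℂ)^2 * (y:ℂ)^2) = ((1 - x^2*y^2 : ℝ) : ℂ) by push_cast; ring,
            Complex.norm_real, Complex.norm_real, Complex.norm_real, Real.norm_eq_abs, Real.norm_eq_abs, Real.norm_eq_abs,
            _root_.abs_of_nonneg hy2, _root_.abs_of_nonneg hxy2, _root_.abs_of_nonneg hC0]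
  have e2 : ‖ω₂ * b * (1 + C * a) / (1 + C) -
      (starRingEnd ℂ) (ω₁ * (a + C) / (1 + C)) * (ω₁ * ω₂ * a * b)‖
      = y * (1 - x ^ 2) / (1 + C) := by
    rw [key2, norm_div, norm_mul, norm_mul, hω₂, one_mul, habs1C,
      show (1 - (x:ℂ)^2) = ((1 - x^2 : ℝ) : ℂ) by push_cast; ring,
      Complex.norm_real, Real.norm_eq_abs, _root_.abs_of_nonneg hx2]
  have e3 : ‖ω₁ * ω₂ * a * b‖ = x * y := by
    rw [norm_mul, norm_mul, norm_mul, hω₁, hω₂]; ring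
  have hfin : (x * (1 - y ^ 2) + C * (1 - x ^ 2 * y ^ 2)) / (1 + C) +
      y * (1 - x ^ 2) / (1 + C) + (x * y) ^ 2 < 1 := by
    rw [← add_div, ← sub_pos]
    have hxy1 : x * y < 1 := by nlinarith
    have key : 0 < (1 - x) * (1 - y) * (1 - x * y) := by
      apply mul_pos (mul_pos (by linarith) (by linarith)) (by linarith)
    rw [show (1:ℝ) - ((x * (1 - y ^ 2) + C * (1 - x ^ 2 * y ^ 2) + y * (1 - x ^ 2)) / (1 + C) +
        (x * y) ^ 2) = ((1 - x) * (1 - y) * (1 - x * y) + C * (1 - (x*y)^2) -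
        C * (1 - x^2*y^2)) / (1 + C) by field_simp; ring]
    apply div_pos ?_ h1Cpos
    nlinarith
  show ‖_‖ + ‖_‖ + ‖_‖ ^ 2 < 1
  calc ‖ω₁ * (a + C) / (1 + C) -
        (starRingEnd ℂ) (ω₂ * b * (1 + C * a) / (1 + C)) * (ω₁ * ω₂ * a * b)‖ +
      ‖ω₂ * b * (1 + C * a) / (1 + C) -
        (starRingEnd ℂ) (ω₁ * (a + C) / (1 + C)) * (ω₁ * ω₂ * a * b)‖ +
      ‖ω₁ * ω₂ * a * b‖ ^ 2
      ≤ (x * (1 - y ^ 2) + C * (1 - x ^ 2 * y ^ 2)) / (1 + C) +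
        y * (1 - x ^ 2) / (1 + C) + (x * y) ^ 2 := by
        rw [e2, e3]; exact add_le_add_left (add_le_add_left e1 _) _
    _ < 1 := hfin
end

section
/- For any z₁, z₂, z₃ ∈ ℂ with |z₁ - conj(z₂)z₃| + |z₂ - conj(z₁)z₃| + |z₃|² < 1, one has |z₁| < 1, |z₂| < 1, and |z₃| < 1. -/
open Complex

theorem stmt1 (z₁ z₂ z₃ : ℂ)
    (h : ‖z₁ - (starRingEnd ℂ) z₂ * z₃‖ +
         ‖z₂ - (starRingEnd ℂ) z₁ * z₃‖ +
         ‖z₃‖ ^ 2 < 1) :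
    ‖z₁‖ < 1 ∧ ‖z₂‖ < 1 ∧ ‖z₃‖ < 1 := by
  have h1 : ‖z₁‖ ≤ ‖z₁ - (starRingEnd ℂ) z₂ * z₃‖
      + ‖z₂‖ * ‖z₃‖ := by
    calc ‖z₁‖ = ‖(z₁ - (starRingEnd ℂ) z₂ * z₃) + (starRingEnd ℂ) z₂ * z₃‖ := by ring_nf
    _ ≤ ‖z₁ - (starRingEnd ℂ) z₂ * z₃‖ + ‖(starRingEnd ℂ) z₂ * z₃‖ :=
        norm_add_le _ _
    _ = ‖z₁ - (starRingEnd ℂ) z₂ * z₃‖ + ‖z₂‖ * ‖z₃‖ := by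
        rw [norm_mul, Complex.norm_conj]
  have h2 : ‖z₂‖ ≤ ‖z₂ - (starRingEnd ℂ) z₁ * z₃‖
      + ‖z₁‖ * ‖z₃‖ := by
    calc ‖z₂‖ = ‖(z₂ - (starRingEnd ℂ) z₁ * z₃) + (starRingEnd ℂ) z₁ * z₃‖ := by ring_nf
    _ ≤ ‖z₂ - (starRingEnd ℂ) z₁ * z₃‖ + ‖(starRingEnd ℂ) z₁ * z₃‖ :=
        norm_add_le _ _
    _ = ‖z₂ - (starRingEnd ℂ) z₁ * z₃‖ + ‖z₁‖ * ‖z₃‖ := by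
        rw [norm_mul, Complex.norm_conj]
  have n1 : (0:ℝ) ≤ ‖z₁ - (starRingEnd ℂ) z₂ * z₃‖ := norm_nonneg _
  have n2 : (0:ℝ) ≤ ‖z₂ - (starRingEnd ℂ) z₁ * z₃‖ := norm_nonneg _
  have n3 : (0:ℝ) ≤ ‖z₃‖ := norm_nonneg _
  have n4 : (0:ℝ) ≤ ‖z₁‖ := norm_nonneg _
  have n5 : (0:ℝ) ≤ ‖z₂‖ := norm_nonneg _
  have hc : ‖z₃‖ < 1 := by nlinarith
  refine ⟨?_, ?_, hc⟩
  · nlinarith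
  · nlinarith
end

section
/- Let f : 𝔻 → ℂ with |f(λ)| ≤ 1 for all λ ∈ 𝔻 be holomorphic, φ : 𝔻 → 𝔻 holomorphic, C ∈ [0,1), and let f₁(λ) = (φ(λ)+C)/(1+C), f₂(λ) = f(λ)(1+Cφ(λ))/(1+C), f₃(λ) = φ(λ)f(λ). Then |f₁(λ) - conj(f₂(λ))f₃(λ)| ≤ (|φ(λ)|(1-|f(λ)|²) + C(1-|φ(λ)|²|f(λ)|²))/(1+C) for all λ ∈ 𝔻. -/
open Complex Metric

theorem stmt6 (f φ : ℂ → ℂ)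
    (hfd : DifferentiableOn ℂ f (ball (0 : ℂ) 1))
    (hfb : ∀ l ∈ ball (0 : ℂ) 1, ‖f l‖ ≤ 1)
    (hφd : DifferentiableOn ℂ φ (ball (0 : ℂ) 1))
    (hφm : ∀ l ∈ ball (0 : ℂ) 1, φ l ∈ ball (0 : ℂ) 1)
    (C : ℝ) (hC0 : 0 ≤ C) (hC1 : C < 1) :
    ∀ l ∈ ball (0 : ℂ) 1,
      ‖(φ l + C) / (1 + C)
          - (starRingEnd ℂ) (f l * (1 + C * φ l) / (1 + C)) * (φ l * f l)‖
        ≤ (‖φ l‖ * (1 - (‖f l‖) ^ 2)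
            + C * (1 - (‖φ l‖) ^ 2 * (‖f l‖) ^ 2)) / (1 + C) := by
  intro l hl
  set a := φ l with ha_def
  set b := f l with hb_def
  have hb : ‖b‖ ≤ 1 := hfb l hl
  have ha : ‖a‖ ≤ 1 := by
    have := hφm l hl
    simp only [mem_ball, dist_zero_right] at this
    exact this.le
  have h1C : (0:ℝ) < 1 + C := by linarith
  have h1Cc : ((1:ℂ) + (C:ℂ)) ≠ 0 := by
    have : ((1 + C : ℝ) : ℂ) ≠ 0 := Complex.ofReal_ne_zero.mpr h1C.ne'
    simpa using this
  have h1 : (starRingEnd ℂ) b * b = ((‖b‖ : ℂ)) ^ 2 := by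
    rw [mul_comm, Complex.mul_conj, Complex.normSq_eq_norm_sq]
    push_cast; ring
  have h2 : (starRingEnd ℂ) a * a = ((‖a‖ : ℂ)) ^ 2 := by
    rw [mul_comm, Complex.mul_conj, Complex.normSq_eq_norm_sq]
    push_cast; ring
  have key : (a + (C:ℂ)) / (1 + (C:ℂ))
        - (starRingEnd ℂ) (b * (1 + (C:ℂ) * a) / (1 + (C:ℂ))) * (a * b)
      = (a * (1 - ((‖b‖ : ℂ)) ^ 2)
          + (C:ℂ) * (1 - ((‖a‖ : ℂ)) ^ 2 * ((‖b‖ : ℂ)) ^ 2))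
        / (1 + (C:ℂ)) := by
    simp only [map_div₀, map_mul, map_add, map_one, Complex.conj_ofReal]
    field_simp
    linear_combination (1 + (C:ℂ)) *
      ((-a - (C:ℂ) * ((starRingEnd ℂ) a) * a) * h1
        - (C:ℂ) * ((‖b‖ : ℂ)) ^ 2 * h2)
      + a * (C:ℂ) * h1 + (C:ℂ)^2 * ((starRingEnd ℂ) a * a * h1
        + ((‖b‖ : ℂ)) ^ 2 * h2)
  rw [key]
  have habs : ‖(1 + (C:ℂ))‖ = 1 + C := by
    rw [show (1 + (C:ℂ)) = ((1 + C : ℝ) : ℂ) by push_cast; ring,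
      Complex.norm_real, Real.norm_eq_abs, abs_of_pos h1C]
  rw [norm_div, habs]
  have hB : (0:ℝ) ≤ 1 - ‖b‖ ^ 2 := by nlinarith [norm_nonneg b]
  have hAB : (0:ℝ) ≤ 1 - ‖a‖ ^ 2 * ‖b‖ ^ 2 := by
    nlinarith [norm_nonneg a, norm_nonneg b]
  gcongr
  calc ‖a * ((1:ℂ) - ((‖b‖ : ℂ)) ^ 2)
        + (C:ℂ) * (1 - ((‖a‖ : ℂ)) ^ 2 * ((‖b‖ : ℂ)) ^ 2)‖
      ≤ ‖a * ((1:ℂ) - ((‖b‖ : ℂ)) ^ 2)‖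
        + ‖(C:ℂ) * (1 - ((‖a‖ : ℂ)) ^ 2 * ((‖b‖ : ℂ)) ^ 2)‖ :=
        norm_add_le _ _
    _ = ‖a‖ * (1 - ‖b‖ ^ 2)
        + C * (1 - ‖a‖ ^ 2 * ‖b‖ ^ 2) := by
        rw [norm_mul, norm_mul]
        rw [show ((1:ℂ) - ((‖b‖ : ℂ)) ^ 2) = ((1 - ‖b‖ ^ 2 : ℝ) : ℂ) by
          push_cast; ring]
        rw [show ((1:ℂ) - ((‖a‖ : ℂ)) ^ 2 * ((‖b‖ : ℂ)) ^ 2)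
            = ((1 - ‖a‖ ^ 2 * ‖b‖ ^ 2 : ℝ) : ℂ) by push_cast; ring]
        rw [Complex.norm_real, Complex.norm_real, Complex.norm_real,
          Real.norm_eq_abs, Real.norm_eq_abs, Real.norm_eq_abs,
          _root_.abs_of_nonneg hB, _root_.abs_of_nonneg hAB, _root_.abs_of_nonneg hC0]
end

section
/- A point z = (z₁,z₂,z₃) ∈ ℂ³ with |z₁| < 1 lies in the closed region {|z₁ - conj(z₂)z₃| + |z₂ - conj(z₁)z₃| + |z₃|² < 1} whenever for all η in the closed unit disc, |(ηz₃ - z₂)/(ηz₁ - 1)| < 1 together with suitable uniformity; conversely, if z lies in the tetrablock 𝔼 then |(ηz₃ - z₂)/(ηz₁ - 1)| < 1 for every η in the closed unit disc. -/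
open Complex

lemma key_real (A B t r : ℝ) (hA : 0 ≤ A) (hB : 0 ≤ B) (ht : 0 ≤ t) (hr : 0 ≤ r)
    (hr1 : r ≤ 1) (h1 : A + B + t^2 < 1) :
    0 < (1-t^2)*(A-(1-t^2)*r)^2 - (1-t^2)*B^2
        + (1-r^2)*(((1-t^2)-(A+B*t))*((1-t^2)+(A+B*t))) := by
  have ht1 : t ≤ 1 := by nlinarith
  have hu : 0 < 1 - t^2 := by nlinarith
  have hAB : A + B ≤ 1 - t^2 := by linarith
  have hQ0 : 0 < ((1-t^2) - (A*t+B))*((1-t^2) + (A*t+B)) :=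
    mul_pos (by nlinarith) (by nlinarith)
  have hQ1 : 0 < (1-t^2)*(((1-t^2)-A+B)*((1-t^2)-A-B)) :=
    mul_pos hu (mul_pos (by nlinarith) (by nlinarith))
  have hc2 : (A+B*t)^2 - (1-t^2)^2*t^2 ≤ ((1-t^2) - (A*t+B))*((1-t^2) + (A*t+B)) := by
    have e1 : 0 ≤ ((1-t^2) - (A+B)) * ((1-t^2) + (A+B)) * (1+t^2) :=
      mul_nonneg (mul_nonneg (by linarith) (by nlinarith)) (by positivity)
    have e2 : 0 ≤ A*B*(1-t)^2 := by positivity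
    nlinarith [e1, e2]
  rcases lt_or_eq_of_le hr1 with h | h
  · have h2 : r*(1-r)*((A+B*t)^2 - (1-t^2)^2*t^2) ≤ r*(1-r)*(((1-t^2) - (A*t+B))*((1-t^2) + (A*t+B))) :=
      mul_le_mul_of_nonneg_left hc2 (mul_nonneg hr (by linarith))
    nlinarith [mul_pos (mul_pos (sub_pos.2 h) (sub_pos.2 h)) hQ0,
      mul_nonneg hr hQ1.le]
  · subst h
    nlinarith [hQ1]

lemma combine_real (A B t s r X Y N : ℝ) (hu : 0 < 1-t^2)
    (hid : (1-t^2)*(X - Y) = N - B^2 + (1-t^2)*(1-s^2)*(1-r^2))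
    (h5 : (A-(1-t^2)*r)^2 ≤ N)
    (hs2' : s^2*(1-t^2)^2 ≤ (A+B*t)^2)
    (hr2 : 0 ≤ 1-r^2)
    (krq : 0 < (1-t^2)*(A-(1-t^2)*r)^2 - (1-t^2)*B^2
        + (1-r^2)*(((1-t^2)-(A+B*t))*((1-t^2)+(A+B*t)))) :
    0 < X - Y := by
  have m1 := mul_le_mul_of_nonneg_left hs2' hr2
  have m2 := mul_le_mul_of_nonneg_left h5 hu.le
  have hid2 : (1-t^2)*((1-t^2)*(X-Y)) = (1-t^2)*(N - B^2 + (1-t^2)*(1-s^2)*(1-r^2)) := by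
    rw [hid]
  nlinarith [mul_pos hu hu]

theorem stmt9 (z : ℂ × ℂ × ℂ) (hz : z ∈ tetrablock) :
    ∀ η : ℂ, ‖η‖ ≤ 1 →
      ‖(η * z.2.2 - z.2.1) / (η * z.1 - 1)‖ < 1 := by
  obtain ⟨z1, z2, z3⟩ := z
  simp only [tetrablock, Set.mem_setOf_eq] at hz
  intro η hη
  set a : ℂ := z1 - (starRingEnd ℂ) z2 * z3 with ha
  set b : ℂ := z2 - (starRingEnd ℂ) z1 * z3 with hb
  set A := ‖a‖ with hA'
  set B := ‖b‖ with hB'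
  set t := ‖z3‖ with ht'
  set s := ‖z1‖ with hs'
  set r := ‖η‖ with hr'
  have hA : 0 ≤ A := norm_nonneg _
  have hB : 0 ≤ B := norm_nonneg _
  have ht : 0 ≤ t := norm_nonneg _
  have hs : 0 ≤ s := norm_nonneg _
  have hr : 0 ≤ r := norm_nonneg _
  have h1 : A + B + t^2 < 1 := hz
  have hu : 0 < 1 - t^2 := by nlinarith
  have hnt : normSq z3 = t^2 := (Complex.sq_norm z3).symm
  have hns : normSq z1 = s^2 := (Complex.sq_norm z1).symm
  have hnr : normSq η = r^2 := (Complex.sq_norm η).symm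
  have hnb : normSq b = B^2 := (Complex.sq_norm b).symm
  have hcast : (1 - (normSq z3 : ℂ)) = ((1 - t^2 : ℝ) : ℂ) := by
    rw [hnt]; push_cast; ring
  -- s(1-t²) ≤ A + Bt
  have hzz : z1 * (1 - (normSq z3 : ℂ)) = a + (starRingEnd ℂ) b * z3 := by
    simp only [ha, hb, map_sub, map_mul, Complex.conj_conj, Complex.normSq_eq_conj_mul_self]
    ring
  have hs2 : s * (1 - t^2) ≤ A + B * t := by
    have e1 : ‖z1 * (1 - (normSq z3 : ℂ))‖ = s * (1 - t^2) := by
      rw [norm_mul, hcast, Complex.norm_real, Real.norm_eq_abs, _root_.abs_of_nonneg hu.le]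
    calc s * (1 - t^2) = ‖a + (starRingEnd ℂ) b * z3‖ := by rw [← e1, hzz]
      _ ≤ ‖a‖ + ‖(starRingEnd ℂ) b * z3‖ := norm_add_le _ _
      _ = A + B * t := by rw [norm_mul, Complex.norm_conj]
  -- the key identity
  have hid : (1 - t^2) * (normSq (η*z1 - 1) - normSq (η*z3 - z2))
      = normSq ((starRingEnd ℂ) a - ((1 - t^2 : ℝ) : ℂ) * η)
        - B^2
        + (1 - t^2) * (1 - s^2) * (1 - r^2) := by
    rw [← hnt, ← hns, ← hnr, ← hnb]
    simp only [ha, hb, normSq_apply, mul_re, mul_im, sub_re, sub_im, one_re, one_im,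
      conj_re, conj_im, ofReal_re, ofReal_im]
    ring
  -- lower bound for the normSq term
  have h5 : (A - (1-t^2)*r)^2 ≤ normSq ((starRingEnd ℂ) a - ((1 - t^2 : ℝ) : ℂ) * η) := by
    have e0 : ‖((1 - t^2 : ℝ) : ℂ) * η‖ = (1-t^2) * r := by
      rw [norm_mul, Complex.norm_real, Real.norm_eq_abs, _root_.abs_of_nonneg hu.le]
    have e1 : |A - (1-t^2)*r| ≤ ‖(starRingEnd ℂ) a - ((1 - t^2 : ℝ) : ℂ) * η‖ := by
      have := abs_norm_sub_norm_le ((starRingEnd ℂ) a) (((1 - t^2 : ℝ) : ℂ) * η)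
      rwa [Complex.norm_conj, e0] at this
    calc (A - (1-t^2)*r)^2 = |A - (1-t^2)*r|^2 := (_root_.sq_abs _).symm
      _ ≤ ‖(starRingEnd ℂ) a - ((1 - t^2 : ℝ) : ℂ) * η‖^2 :=
          pow_le_pow_left₀ (abs_nonneg _) e1 2
      _ = normSq _ := Complex.sq_norm _
  have krq := key_real A B t r hA hB ht hr hη h1
  have hs2' : s^2*(1-t^2)^2 ≤ (A+B*t)^2 := by
    have h7 := pow_le_pow_left₀ (by positivity) hs2 2
    calc s^2*(1-t^2)^2 = (s*(1-t^2))^2 := by ring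
      _ ≤ (A+B*t)^2 := h7
  have hr2 : 0 ≤ 1 - r^2 := by nlinarith
  have hpos : 0 < normSq (η*z1 - 1) - normSq (η*z3 - z2) :=
    combine_real A B t s r _ _ _ hu hid h5 hs2' hr2 krq
  have habs : ‖η*z3 - z2‖ < ‖η*z1 - 1‖ := by
    have h6 : ‖η*z3 - z2‖^2 < ‖η*z1 - 1‖^2 := by
      rw [Complex.sq_norm, Complex.sq_norm]; linarith
    exact lt_of_pow_lt_pow_left₀ 2 (norm_nonneg _) h6
  have hden : 0 < ‖η*z1 - 1‖ := lt_of_le_of_lt (norm_nonneg _) habs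
  rw [norm_div, div_lt_one hden]
  exact habs
end

section
/- Suppose f = (f₁, f₂) : 𝔻 → ℂ² is holomorphic with f(0) = (0,0), ω is unimodular, F(z₁,z₂) = (2ωz₂ - z₁)/(2 - ωz₁), F ∘ f = id on 𝔻, and there is C ∈ ℝ with ((-2 + 2ω²f₂(λ))/(2 - ωf₁(λ))²)·f₁(λ) + (4ω/(2 - ωf₁(λ)))·f₂(λ) = Cλ for all λ ∈ 𝔻. Then f₁(λ) = 2(2-C)λ/(ωλ(1-C) - 1) and f₂(λ) = λ(λ - conj(ω)(1-C))/(1 - λω(1-C)) for all λ ∈ 𝔻, and moreover C ∈ [1,2]. -/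
open Complex Metric

theorem stmt12 (f₁ f₂ : ℂ → ℂ)
    (hf₁ : DifferentiableOn ℂ f₁ (ball (0 : ℂ) 1))
    (hf₂ : DifferentiableOn ℂ f₂ (ball (0 : ℂ) 1))
    (hG : ∀ l ∈ ball (0 : ℂ) 1, ∃ μ ∈ ball (0 : ℂ) 1, ∃ ν ∈ ball (0 : ℂ) 1,
      f₁ l = μ + ν ∧ f₂ l = μ * ν)
    (hf0 : f₁ 0 = 0 ∧ f₂ 0 = 0)
    (ω : ℂ) (hω : ‖ω‖ = 1)
    (hFf : ∀ l ∈ ball (0 : ℂ) 1, (2 * ω * f₂ l - f₁ l) / (2 - ω * f₁ l) = l)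
    (C : ℝ)
    (hC : ∀ l ∈ ball (0 : ℂ) 1,
      ((-2 + 2 * ω ^ 2 * f₂ l) / (2 - ω * f₁ l) ^ 2) * f₁ l
        + (4 * ω / (2 - ω * f₁ l)) * f₂ l = C * l) :
    (∀ l ∈ ball (0 : ℂ) 1,
      f₁ l = 2 * (2 - C) * l / (ω * l * (1 - C) - 1) ∧
      f₂ l = l * (l - (starRingEnd ℂ) ω * (1 - C)) / (1 - l * ω * (1 - C))) ∧
    C ∈ Set.Icc (1 : ℝ) 2 := by
  have hω0 : ω ≠ 0 := by
    intro h; rw [h] at hω; simp at hω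
  have hωc : ω * (starRingEnd ℂ) ω = 1 := by
    have := Complex.mul_conj ω
    rw [this]
    rw [Complex.normSq_eq_norm_sq, hω]
    norm_num
  -- |f₁ l| < 2 on the ball
  have habs1 : ∀ l ∈ ball (0 : ℂ) 1, ‖f₁ l‖ < 2 := by
    intro l hl
    obtain ⟨μ, hμ, ν, hν, h1, h2⟩ := hG l hl
    rw [mem_ball_zero_iff] at hμ hν
    rw [h1]
    calc ‖μ + ν‖ ≤ ‖μ‖ + ‖ν‖ := norm_add_le _ _
      _ < 1 + 1 := by
          exact add_lt_add hμ hν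
      _ = 2 := by norm_num
  have hD : ∀ l ∈ ball (0 : ℂ) 1, 2 - ω * f₁ l ≠ 0 := by
    intro l hl h
    have h2 : ω * f₁ l = 2 := (sub_eq_zero.mp h).symm
    have : ‖ω * f₁ l‖ = 2 := by rw [h2]; simp
    rw [norm_mul, hω, one_mul] at this
    have := habs1 l hl
    linarith
  -- key1 : 2 ω f₂ = f₁ (1 - l ω) + 2 l
  have key1 : ∀ l ∈ ball (0 : ℂ) 1, 2 * ω * f₂ l = f₁ l * (1 - l * ω) + 2 * l := by
    intro l hl
    have h := hFf l hl
    rw [div_eq_iff (hD l hl)] at h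
    linear_combination h
  -- hlin : (ω l (1-C) - 1) f₁ = 2 (2-C) l
  have hlin : ∀ l ∈ ball (0 : ℂ) 1, (ω * l * (1 - C) - 1) * f₁ l = 2 * (2 - C) * l := by
    intro l hl
    have hD' := hD l hl
    have h := hC l hl
    field_simp at h
    have hfac3 : ((ω * l * (1 - C) - 1) * f₁ l - 2 * (2 - C) * l) * (ω * f₁ l - 2)
        * (2 - ω * f₁ l) = 0 := by
      linear_combination (2 - ω * f₁ l) * h - ((4 - ω * f₁ l) * (2 - ω * f₁ l)) * key1 l hl
    have hfac := (mul_eq_zero.mp hfac3).resolve_right hD'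
    rcases mul_eq_zero.mp hfac with h' | h'
    · linear_combination h'
    · exact absurd (by linear_combination h' : ω * f₁ l = 2)
        (fun hh => hD' (by linear_combination -hh))
  -- Step: |1 - C| ≤ 1
  have h1C : |1 - C| ≤ 1 := by
    by_contra hcon
    push_neg at hcon
    have hne : (1 : ℂ) - C ≠ 0 := by
      intro h
      have : (1 : ℝ) - C = 0 := by exact_mod_cast h
      rw [this] at hcon; simp at hcon; linarith
    have hC2 : C ≠ 2 := by
      intro h; rw [h] at hcon; norm_num at hcon
    set l₀ : ℂ := (starRingEnd ℂ) ω / (1 - (C : ℂ)) with hl₀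
    have hl₀mem : l₀ ∈ ball (0 : ℂ) 1 := by
      rw [mem_ball_zero_iff]
      rw [hl₀]
      rw [norm_div]
      have h1 : ‖(starRingEnd ℂ) ω‖ = 1 := by
        simp [hω]
      have h2 : ‖(1 : ℂ) - (C : ℂ)‖ = |1 - C| := by
        rw [show (1 : ℂ) - (C : ℂ) = ((1 - C : ℝ) : ℂ) by push_cast; ring]
        rw [Complex.norm_real]
        simp
      rw [h1, h2]
      rw [div_lt_one (by linarith)]
      linarith
    have h := hlin l₀ hl₀mem
    have hcoef : ω * l₀ * (1 - (C : ℂ)) - 1 = 0 := by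
      rw [hl₀]
      field_simp
      linear_combination hωc
    rw [hcoef, zero_mul] at h
    have hl₀ne : l₀ ≠ 0 := by
      rw [hl₀]
      apply div_ne_zero _ hne
      simp [hω0]
    have h2Cne : (2 : ℂ) - C ≠ 0 := by
      intro h'
      have : (2 : ℝ) - C = 0 := by exact_mod_cast h'
      exact hC2 (by linarith)
    exact absurd h.symm (by
      apply mul_ne_zero (mul_ne_zero (by norm_num) h2Cne) hl₀ne)
  have hCle2 : C ≤ 2 := by
    rcases abs_le.mp h1C with ⟨ha, hb⟩; linarith
  have hC0 : 0 ≤ C := by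
    rcases abs_le.mp h1C with ⟨ha, hb⟩; linarith
  -- C ≥ 1
  have hCge1 : 1 ≤ C := by
    by_contra hcon
    push_neg at hcon
    set s : ℝ := 3 - 2 * C with hs
    have hs1 : 1 < s := by rw [hs]; linarith
    set t : ℝ := (1 + s⁻¹) / 2 with ht
    have hspos : 0 < s := by linarith
    have hsinv : s⁻¹ < 1 := by
      rw [inv_lt_one_iff₀]; right; exact hs1
    have hsinvpos : 0 < s⁻¹ := by positivity
    have ht1 : t < 1 := by rw [ht]; linarith
    have htpos : 0 < t := by rw [ht]; positivity
    have hts : 1 < t * s := by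
      rw [ht]
      have : (1 + s⁻¹) / 2 * s = (s + s⁻¹ * s) / 2 := by ring
      rw [this, inv_mul_cancel₀ (ne_of_gt hspos)]
      linarith
    set l : ℂ := (t : ℂ) * (starRingEnd ℂ) ω with hldef
    have hlmem : l ∈ ball (0 : ℂ) 1 := by
      rw [mem_ball_zero_iff, hldef, norm_mul]
      have h1 : ‖(starRingEnd ℂ) ω‖ = 1 := by simp [hω]
      rw [h1, mul_one, Complex.norm_real]
      rw [Real.norm_eq_abs, abs_of_pos htpos]
      exact ht1
    have h := hlin l hlmem
    have hcoef : ω * l * (1 - (C : ℂ)) - 1 = ((t * (1 - C) - 1 : ℝ) : ℂ) := by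
      rw [hldef]; push_cast
      linear_combination ((t : ℂ) * (1 - (C : ℂ))) * hωc
    rw [hcoef] at h
    have habs := congrArg norm h
    rw [norm_mul, norm_mul, norm_mul] at habs
    have h1 : ‖((t * (1 - C) - 1 : ℝ) : ℂ)‖ = 1 - t * (1 - C) := by
      rw [Complex.norm_real, Real.norm_eq_abs, abs_of_neg]
      · ring
      · nlinarith
    have h2 : ‖(2 : ℂ) - C‖ = 2 - C := by
      rw [show (2 : ℂ) - (C : ℂ) = ((2 - C : ℝ) : ℂ) by push_cast; ring]
      rw [Complex.norm_real, Real.norm_eq_abs, abs_of_pos (by linarith)]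
    have h3 : ‖l‖ = t := by
      rw [hldef, norm_mul, Complex.norm_real, Real.norm_eq_abs, Complex.norm_conj, hω, mul_one,
        abs_of_pos htpos]
    rw [h1, h2, h3] at habs
    simp only [Complex.norm_two] at habs
    have hf1lt := habs1 l hlmem
    have hden : 0 < 1 - t * (1 - C) := by nlinarith
    have : 2 * (2 - C) * t < (1 - t * (1 - C)) * 2 := by
      rw [← habs]
      apply mul_lt_mul_of_pos_left hf1lt hden
    nlinarith
  refine ⟨?_, ⟨hCge1, hCle2⟩⟩
  intro l hl
  have hnl : ‖l‖ < 1 := mem_ball_zero_iff.mp hl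
  have hd1 : ω * l * (1 - (C : ℂ)) - 1 ≠ 0 := by
    intro h
    have h' : ω * l * (1 - (C : ℂ)) = 1 := by linear_combination h
    have := congrArg norm h'
    rw [norm_mul, norm_mul, hω, one_mul] at this
    have hc : ‖1 - (C : ℂ)‖ = C - 1 := by
      rw [show (1 : ℂ) - (C : ℂ) = ((1 - C : ℝ) : ℂ) by push_cast; ring]
      rw [Complex.norm_real, Real.norm_eq_abs, abs_of_nonpos (by linarith)]
      ring
    rw [hc] at this
    simp only [norm_one] at this
    have : ‖l‖ * (C - 1) ≤ ‖l‖ := by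
      nlinarith [norm_nonneg l]
    have hl1 : ‖l‖ < 1 := by exact hnl
    nlinarith
  have hd2 : 1 - l * ω * (1 - (C : ℂ)) ≠ 0 := by
    intro h
    exact hd1 (by linear_combination -h)
  constructor
  · rw [eq_div_iff hd1]
    linear_combination hlin l hl
  · rw [eq_div_iff hd2]
    have key := key1 l hl
    have hl2 := hlin l hl
    have hmain : 2 * ω * (f₂ l * (1 - l * ω * (1 - (C : ℂ))))
        = 2 * ω * (l * (l - (starRingEnd ℂ) ω * (1 - (C : ℂ)))) := by
      linear_combination (1 - l * ω * (1 - (C : ℂ))) * key - (1 - l * ω) * hl2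
        + 2 * l * (1 - (C : ℂ)) * hωc
    exact mul_left_cancel₀ (by simpa using hω0) hmain
end

section
/- The function F(z) = z₂/√(1 + z₃ - z₁z₂) maps the tetrablock 𝔼 into the open unit disc 𝔻, where the square root is the principal branch (note Re(1 + z₃ - z₁z₂) > 0 for z ∈ 𝔼). -/
open Complex

private lemma Hpos (a b c : ℝ) (ha : 0 ≤ a) (hb : 0 ≤ b) (hc : 0 ≤ c) (hc1 : c < 1)
    (h : a + b + c^2 < 1) :
    0 < ((1-c^2)^2 - a^2 - b^2 + 2*a^2)*((1-c^2)^2 - a^2 - b^2 - 2*a*b*c)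
      + a^2*(1-c^2)*(a^2-b^2) := by
  have hD : 0 < 1 - c^2 := by nlinarith
  have hm : 0 < 1 - c^2 - a - b := by linarith
  have hc' : 0 ≤ 1 - c := by linarith
  have hK : 2*a*b ≤ (1-c^2)^2 - a^2 - b^2 := by
    nlinarith [mul_pos hm (by linarith : 0 < 1 - c^2 + a + b)]
  have t2 : 0 < (1-c^2-b)*(1-c^2+b)*(1-c^2-a-b)*(1-c^2+a+b) := by
    apply mul_pos; apply mul_pos; apply mul_pos <;> linarith
    all_goals linarith
  have t3 : 0 ≤ a^2*(1-c^2-a-b)*(1-c^2+a+b) := by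
    apply mul_nonneg; apply mul_nonneg (sq_nonneg a) hm.le; linarith
  have habc : 0 ≤ a*b*(1-c) := mul_nonneg (mul_nonneg ha hb) hc'
  have hbr : a^2*(1-c^2)*b^2 ≤ 2*a*b*(1-c)*((1-c^2)^2-a^2-b^2) := by
    nlinarith [mul_nonneg habc (by linarith : (0:ℝ) ≤ (1-c^2)^2-a^2-b^2 - 2*a*b),
      mul_nonneg (mul_nonneg (sq_nonneg a) (sq_nonneg b)) hc',
      mul_nonneg (mul_nonneg (sq_nonneg (a*b)) hc) hc']
  have t4 : 0 ≤ 4*a^3*b*(1-c) := by positivity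
  have t5 : 0 ≤ a^4*(1-c^2) := by positivity
  nlinarith [t2, t3, hbr, t4, t5]

set_option maxHeartbeats 2000000 in
private lemma key (z1 z2 z3 : ℂ)
    (h : ‖z1 - (starRingEnd ℂ) z2 * z3‖ +
         ‖z2 - (starRingEnd ℂ) z1 * z3‖ + (‖z3‖) ^ 2 < 1) :
    ‖z1 * z2 - z3‖ + (‖z2‖) ^ 2 < 1 := by
  set a := ‖z1 - (starRingEnd ℂ) z2 * z3‖ with ha_def
  set b := ‖z2 - (starRingEnd ℂ) z1 * z3‖ with hb_def
  set c := ‖z3‖ with hc_def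
  have ha : 0 ≤ a := norm_nonneg _
  have hb : 0 ≤ b := norm_nonneg _
  have hc : 0 ≤ c := norm_nonneg _
  have hc1 : c < 1 := by nlinarith
  have hD : 0 < 1 - c^2 := by nlinarith
  have hna : Complex.normSq (z1 - (starRingEnd ℂ) z2 * z3) = a^2 := (Complex.sq_norm _).symm
  have hnb : Complex.normSq (z2 - (starRingEnd ℂ) z1 * z3) = b^2 := (Complex.sq_norm _).symm
  have hnc : Complex.normSq z3 = c^2 := (Complex.sq_norm _).symm
  set x := ((z1 - (starRingEnd ℂ) z2 * z3) * (z2 - (starRingEnd ℂ) z1 * z3) *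
    (starRingEnd ℂ) z3).re with hx_def
  set K : ℝ := (1-c^2)^2 - a^2 - b^2 with hK_def
  set T : ℂ := (z1 - (starRingEnd ℂ) z2*z3)*(z2 - (starRingEnd ℂ) z1*z3)
      + ((starRingEnd ℂ) z1 - z2*(starRingEnd ℂ) z3)*((starRingEnd ℂ) z2 - z1*(starRingEnd ℂ) z3)*z3^2
      - (K:ℂ)*z3 with hT_def
  -- identity I1 : z2 * (1-c^2) = Q + conj P * z3
  have I1 : z2 * ((1 - c^2 : ℝ) : ℂ)
      = (z2 - (starRingEnd ℂ) z1*z3) + ((starRingEnd ℂ) z1 - z2*(starRingEnd ℂ) z3)*z3 := by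
    rw [← hnc]
    simp only [Complex.ext_iff, Complex.normSq_apply, Complex.mul_re, Complex.mul_im,
      Complex.add_re, Complex.add_im, Complex.sub_re, Complex.sub_im, Complex.conj_re,
      Complex.conj_im, Complex.ofReal_re, Complex.ofReal_im, Complex.one_re, Complex.one_im]
    constructor <;> ring
  -- identity I3 : (z1 z2 - z3) * (1-c^2)^2 = T
  have I3 : (z1*z2 - z3) * ((1 - c^2 : ℝ) : ℂ)^2 = T := by
    rw [hT_def, hK_def, ← hna, ← hnb, ← hnc]
    simp only [Complex.ext_iff, Complex.normSq_apply, Complex.mul_re, Complex.mul_im,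
      Complex.add_re, Complex.add_im, Complex.sub_re, Complex.sub_im, Complex.conj_re,
      Complex.conj_im, Complex.ofReal_re, Complex.ofReal_im, Complex.one_re, Complex.one_im,
      pow_two]
    constructor <;> ring
  -- normSq of second column
  have ns1 : Complex.normSq ((z2 - (starRingEnd ℂ) z1*z3)
      + ((starRingEnd ℂ) z1 - z2*(starRingEnd ℂ) z3)*z3) = b^2 + a^2*c^2 + 2*x := by
    rw [← hna, ← hnb, ← hnc, hx_def]
    simp only [Complex.normSq_apply, Complex.mul_re, Complex.mul_im,
      Complex.add_re, Complex.add_im, Complex.sub_re, Complex.sub_im, Complex.conj_re,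
      Complex.conj_im]
    ring
  -- normSq of T
  have ns2 : Complex.normSq T = a^2*b^2*(1-c^2)^2 + K^2*c^2 + 4*x^2 - 2*K*(1+c^2)*x := by
    rw [hT_def, ← hna, ← hnb, ← hnc, hx_def]
    simp only [Complex.normSq_apply, Complex.mul_re, Complex.mul_im,
      Complex.add_re, Complex.add_im, Complex.sub_re, Complex.sub_im, Complex.conj_re,
      Complex.conj_im, Complex.ofReal_re, Complex.ofReal_im, pow_two]
    ring
  -- abs facts
  have habs1 : ‖z1*z2 - z3‖ * (1-c^2)^2 = ‖T‖ := by
    have h' := congrArg (‖·‖) I3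
    rwa [norm_mul, norm_pow, Complex.norm_real, Real.norm_eq_abs, abs_of_pos hD] at h'
  have habs2 : (‖z2‖)^2 * (1-c^2)^2 = b^2 + a^2*c^2 + 2*x := by
    have h' := congrArg Complex.normSq I1
    rwa [Complex.normSq_mul, Complex.normSq_ofReal, ns1, ← Complex.sq_norm z2, ← pow_two,
      ← _root_.sq_abs (1 - c^2), abs_of_pos hD] at h'
  have hx1 : x ≤ a*b*c := by
    calc x ≤ ‖(z1 - (starRingEnd ℂ) z2 * z3) * (z2 - (starRingEnd ℂ) z1 * z3) *
        (starRingEnd ℂ) z3‖ := Complex.re_le_norm _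
    _ = a*b*c := by rw [norm_mul, norm_mul, Complex.norm_conj]
  -- real inequalities
  have hcoef : (0:ℝ) ≤ 2*(1-c^2)*((1-c^2)^2 + a^2 - b^2)*(a*b*c - x) := by
    apply mul_nonneg (mul_nonneg (mul_nonneg (by norm_num) hD.le) _) (by linarith)
    nlinarith
  have hH := Hpos a b c ha hb hc hc1 h
  have hR : 0 < (1-c^2)^2 - b^2 - a^2*c^2 - 2*x := by
    have h1 : 0 ≤ a*(1-c) := mul_nonneg ha (by linarith)
    nlinarith [mul_pos (show (0:ℝ) < 1-c^2 - (b + a*c) by nlinarith)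
      (show (0:ℝ) < 1-c^2 + (b + a*c) by nlinarith)]
  have hER : Complex.normSq T < ((1-c^2)^2 - b^2 - a^2*c^2 - 2*x)^2 := by
    rw [ns2, hK_def]
    nlinarith [mul_pos hD hH, hcoef]
  have habsT : ‖T‖ < (1-c^2)^2 - b^2 - a^2*c^2 - 2*x := by
    nlinarith [norm_nonneg T, Complex.sq_norm T, hER, hR]
  have final : (‖z1*z2 - z3‖ + (‖z2‖)^2) * (1-c^2)^2 < 1 * (1-c^2)^2 := by
    have := habs2
    nlinarith [habs1, habsT]
  have := lt_of_mul_lt_mul_right final (by positivity : (0:ℝ) ≤ (1-c^2)^2)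
  linarith

theorem stmt16 (z : ℂ × ℂ × ℂ) (hz : z ∈ tetrablock) :
    0 < (1 + z.2.2 - z.1 * z.2.1).re ∧
    ‖z.2.1 / (1 + z.2.2 - z.1 * z.2.1) ^ ((1 : ℂ) / 2)‖ < 1 := by
  obtain ⟨z1, z2, z3⟩ := z
  have h : ‖z1 - (starRingEnd ℂ) z2 * z3‖ +
      ‖z2 - (starRingEnd ℂ) z1 * z3‖ + (‖z3‖) ^ 2 < 1 := hz
  have hkey := key z1 z2 z3 h
  have hre : (0:ℝ) < (1 + z3 - z1 * z2).re := by
    have h1 : (z1*z2 - z3).re ≤ ‖z1*z2 - z3‖ := Complex.re_le_norm _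
    have h2 : (1 + z3 - z1 * z2).re = 1 - (z1*z2 - z3).re := by
      simp [Complex.add_re, Complex.sub_re, Complex.one_re]; ring
    have h3 : 0 ≤ (‖z2‖)^2 := by positivity
    rw [h2]; linarith
  refine ⟨hre, ?_⟩
  set w : ℂ := 1 + z3 - z1 * z2 with hw_def
  have hw0 : w ≠ 0 := by
    intro h0
    rw [h0] at hre
    simp at hre
  have htri : (1:ℝ) ≤ ‖w‖ + ‖z1*z2 - z3‖ := by
    have := norm_add_le w (z1*z2 - z3)
    have he : w + (z1*z2 - z3) = 1 := by rw [hw_def]; ring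
    rw [he] at this
    simpa using this
  have habsw : (‖z2‖)^2 < ‖w‖ := by linarith
  have hcpow : ‖w ^ ((1:ℂ)/2)‖ = Real.sqrt (‖w‖) := by
    rw [Complex.norm_cpow_of_ne_zero hw0]
    norm_num
    rw [Real.sqrt_eq_rpow]
  rw [norm_div, hcpow, div_lt_one (by
    have : 0 < ‖w‖ := norm_pos_iff.mpr hw0
    positivity)]
  exact (Real.lt_sqrt (norm_nonneg z2)).2 habsw
end
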